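/- For positive integers m, l and even n, the dimension of the space of homogeneous quasi-invariant polynomials of degree n for C₂(m,l) supported on odd powers of x (and hence odd powers of y) is 0 if n < 2(m+l+1), is 1 if n = 2(m+l+1), and is n/2 - m - l - 1 if n > 2(m+l+1). -/

import Mathlib

open MvPolynomial

/-- Evaluation at the point `(x, y) ∈ ℂ²`, as a linear map on polynomials. -/
noncomputable def evalAt (x y : ℂ) : MvPolynomial (Fin 2) ℂ →ₗ[ℂ] ℂ :=
  (MvPolynomial.aeval ![x, y]).toLinearMap

/-- The directional derivative `a·∂_x + b·∂_y` on polynomials in two variables. -/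
noncomputable def dirD (a b : ℂ) : Module.End ℂ (MvPolynomial (Fin 2) ℂ) :=
  a • (MvPolynomial.pderiv 0).toLinearMap + b • (MvPolynomial.pderiv 1).toLinearMap

/-- The submodule of quasi-invariants of the configuration `C₂(m,l)`: the line `x = 0` carries
multiplicity `m`, the line `y = 0` multiplicity `l`, and the lines `ξx ± y = 0` (normal vectors
`ξe₁ ± e₂`) multiplicity `1`, where `ξ² = (2l+1)/(2m+1)`. A polynomial `q` is quasi-invariant
if the odd normal derivatives `∂_α^{2r-1} q`, `r = 1,...,m_α`, vanish on each line. -/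
noncomputable def quasiC (m l : ℕ) (ξ : ℂ) : Submodule ℂ (MvPolynomial (Fin 2) ℂ) :=
  (⨅ r ∈ Finset.Icc 1 m, ⨅ y : ℂ,
    LinearMap.ker ((evalAt 0 y).comp ((dirD 1 0 ^ (2 * r - 1) : Module.End ℂ _) :
      MvPolynomial (Fin 2) ℂ →ₗ[ℂ] MvPolynomial (Fin 2) ℂ))) ⊓
  (⨅ r ∈ Finset.Icc 1 l, ⨅ x : ℂ,
    LinearMap.ker ((evalAt x 0).comp ((dirD 0 1 ^ (2 * r - 1) : Module.End ℂ _) :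
      MvPolynomial (Fin 2) ℂ →ₗ[ℂ] MvPolynomial (Fin 2) ℂ))) ⊓
  (⨅ t : ℂ, LinearMap.ker ((evalAt t (-(ξ * t))).comp (dirD ξ 1))) ⊓
  (⨅ t : ℂ, LinearMap.ker ((evalAt t (ξ * t)).comp (dirD ξ (-1))))

/-- The submodule of polynomials supported on a set `s` of monomials. -/
noncomputable def suppOn (s : Set (Fin 2 →₀ ℕ)) : Submodule ℂ (MvPolynomial (Fin 2) ℂ) where
  carrier := {q | ∀ d, d ∉ s → MvPolynomial.coeff d q = 0}
  add_mem' := by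
    intro p q hp hq d hd
    simp [MvPolynomial.coeff_add, hp d hd, hq d hd]
  zero_mem' := by intro d hd; simp
  smul_mem' := by
    intro c q hq d hd
    simp [MvPolynomial.coeff_smul, hq d hd]


noncomputable section
namespace QCaux

def D2 (i j : ℕ) : Fin 2 →₀ ℕ := Finsupp.single 0 i + Finsupp.single 1 j

@[simp] lemma D2_apply0 (i j : ℕ) : D2 i j 0 = i := by
  simp [D2, Finsupp.single_apply]

@[simp] lemma D2_apply1 (i j : ℕ) : D2 i j 1 = j := by
  simp [D2, Finsupp.single_apply]

lemma eq_D2 (d : Fin 2 →₀ ℕ) : d = D2 (d 0) (d 1) := by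
  ext a
  fin_cases a <;> simp [D2, Finsupp.single_apply]

lemma D2_sub0 (i j : ℕ) : D2 i j - Finsupp.single 0 1 = D2 (i-1) j := by
  ext a
  fin_cases a <;> simp [D2, Finsupp.single_apply, Finsupp.tsub_apply]

lemma D2_sub1 (i j : ℕ) : D2 i j - Finsupp.single 1 1 = D2 i (j-1) := by
  ext a
  fin_cases a <;> simp [D2, Finsupp.single_apply, Finsupp.tsub_apply]

lemma D2_inj {i j i' j' : ℕ} (h : D2 i j = D2 i' j') : i = i' ∧ j = j' := by
  constructor
  · have := congrArg (fun d : Fin 2 →₀ ℕ => d 0) h; simpa using this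
  · have := congrArg (fun d : Fin 2 →₀ ℕ => d 1) h; simpa using this

lemma pderiv0_mono (i j : ℕ) (c : ℂ) :
    pderiv 0 (monomial (D2 i j) c) = monomial (D2 (i-1) j) (c * i) := by
  rw [pderiv_monomial, D2_sub0, D2_apply0]

lemma pderiv1_mono (i j : ℕ) (c : ℂ) :
    pderiv 1 (monomial (D2 i j) c) = monomial (D2 i (j-1)) (c * j) := by
  rw [pderiv_monomial, D2_sub1, D2_apply1]

lemma dirD10 : dirD 1 0 = (pderiv 0 : Derivation ℂ _ _).toLinearMap := by
  simp [dirD]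

lemma dirD01 : dirD 0 1 = (pderiv 1 : Derivation ℂ _ _).toLinearMap := by
  simp [dirD]

lemma dirD10_pow (k i j : ℕ) (c : ℂ) :
    (dirD 1 0 ^ k) (monomial (D2 i j) c)
      = monomial (D2 (i-k) j) (c * (i.descFactorial k)) := by
  induction k with
  | zero => simp
  | succ k ih =>
      rw [pow_succ', Module.End.mul_apply, ih, dirD10, Derivation.coeFn_coe,
        pderiv0_mono]
      congr 1
      rw [Nat.descFactorial_succ]
      push_cast
      ring_nf


lemma dirD01_pow (k i j : ℕ) (c : ℂ) :
    (dirD 0 1 ^ k) (monomial (D2 i j) c)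
      = monomial (D2 i (j-k)) (c * (j.descFactorial k)) := by
  induction k with
  | zero => simp
  | succ k ih =>
      rw [pow_succ', Module.End.mul_apply, ih, dirD01, Derivation.coeFn_coe,
        pderiv1_mono]
      congr 1
      rw [Nat.descFactorial_succ]
      push_cast
      ring_nf

lemma dirD_mono (a b : ℂ) (i j : ℕ) (c : ℂ) :
    dirD a b (monomial (D2 i j) c)
      = monomial (D2 (i-1) j) (a * (c * i)) + monomial (D2 i (j-1)) (b * (c * j)) := by
  simp only [dirD, LinearMap.add_apply, LinearMap.smul_apply, Derivation.coeFn_coe,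
    pderiv0_mono, pderiv1_mono, smul_monomial, smul_eq_mul]

lemma evalAt_mono (x y : ℂ) (i j : ℕ) (c : ℂ) :
    evalAt x y (monomial (D2 i j) c) = c * x ^ i * y ^ j := by
  have h : (monomial (D2 i j)) c = c • ((X 0 : MvPolynomial (Fin 2) ℂ) ^ i * X 1 ^ j) := by
    rw [X_pow_eq_monomial, X_pow_eq_monomial, monomial_mul, smul_monomial]
    simp [D2]
  rw [h]
  simp [evalAt, mul_assoc]


lemma degree_fin2 (d : Fin 2 →₀ ℕ) : d.degree = d 0 + d 1 := by
  rw [Finsupp.degree_apply, Finset.sum_subset (Finset.subset_univ _)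
    (fun x _ hx => Finsupp.notMem_support_iff.mp hx), Fin.sum_univ_two]

def odds (n : ℕ) : Finset ℕ := (Finset.range (n+1)).filter (fun i => Odd i)

lemma rep (n : ℕ) (q : MvPolynomial (Fin 2) ℂ)
    (h1 : q ∈ homogeneousSubmodule (Fin 2) ℂ n)
    (h2 : q ∈ suppOn {d | Odd (d 0)}) :
    q = ∑ i ∈ odds n, monomial (D2 i (n-i)) (coeff (D2 i (n-i)) q) := by
  rw [mem_homogeneousSubmodule] at h1
  ext d
  rw [coeff_sum]
  by_cases hd : d 0 + d 1 = n ∧ Odd (d 0)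
  · obtain ⟨hsum, hodd⟩ := hd
    have hd2 : d = D2 (d 0) (n - d 0) := by
      have h1' : d 1 = n - d 0 := by omega
      conv_lhs => rw [eq_D2 d]
      rw [h1']
    rw [Finset.sum_eq_single_of_mem (d 0)]
    · rw [coeff_monomial, if_pos hd2.symm, ← hd2]
    · simp only [odds, Finset.mem_filter, Finset.mem_range]
      exact ⟨by omega, hodd⟩
    · intro i hi hne
      rw [coeff_monomial, if_neg]
      intro h
      exact hne (D2_inj (h.trans hd2)).1
  · have hq0 : coeff d q = 0 := by
      by_cases ho : Odd (d 0)
      · refine h1.coeff_eq_zero ?_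
        rw [degree_fin2]
        intro h
        exact hd ⟨h, ho⟩
      · exact h2 d ho
    rw [hq0, eq_comm]
    refine Finset.sum_eq_zero fun i hi => ?_
    simp only [odds, Finset.mem_filter, Finset.mem_range] at hi
    rw [coeff_monomial, if_neg]
    intro h
    have h0 := (D2_inj (h.trans (eq_D2 d))).1
    have h1' := (D2_inj (h.trans (eq_D2 d))).2
    exact hd ⟨by omega, h0 ▸ hi.2⟩


def Iset (m l n : ℕ) : Finset ℕ :=
  (Finset.range (n+1)).filter (fun i => Odd i ∧ 2*m+1 ≤ i ∧ i + 2*l + 1 ≤ n)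

lemma mem_Iset {m l n i : ℕ} :
    i ∈ Iset m l n ↔ Odd i ∧ 2*m+1 ≤ i ∧ i + 2*l+1 ≤ n := by
  simp only [Iset, Finset.mem_filter, Finset.mem_range]
  constructor
  · tauto
  · intro h
    exact ⟨by omega, h⟩

lemma Iset_card (m l n : ℕ) (hn : Even n) : (Iset m l n).card = n/2 - m - l := by
  rw [Nat.even_iff] at hn
  have himg : Iset m l n = (Finset.range (n/2 - m - l)).image (fun k => 2*k + 2*m + 1) := by
    ext i
    simp only [mem_Iset, Finset.mem_image, Finset.mem_range]
    constructor
    · rintro ⟨⟨k, hk⟩, h1, h2⟩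
      exact ⟨k - m, by omega, by omega⟩
    · rintro ⟨k, hk, rfl⟩
      exact ⟨⟨k + m, by ring⟩, by omega, by omega⟩
  rw [himg, Finset.card_image_of_injective _ (fun a b h => by omega), Finset.card_range]

def cC (ξ : ℂ) (n i : ℕ) : ℂ := ξ^(n-i-1) * (((n : ℂ) - i) - ξ^2 * i)

def monoC (n i : ℕ) : MvPolynomial (Fin 2) ℂ := monomial (D2 i (n-i)) 1

def Phi (m l n : ℕ) : (↥(Iset m l n) → ℂ) →ₗ[ℂ] MvPolynomial (Fin 2) ℂ :=
  ∑ i : ↥(Iset m l n), (LinearMap.proj i).smulRight (monoC n i)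

lemma Phi_apply (m l n : ℕ) (a : ↥(Iset m l n) → ℂ) :
    Phi m l n a = ∑ i : ↥(Iset m l n), a i • monoC n i := by
  simp [Phi]

def fC (m l n : ℕ) (ξ : ℂ) : (↥(Iset m l n) → ℂ) →ₗ[ℂ] ℂ :=
  ∑ i : ↥(Iset m l n), cC ξ n i • LinearMap.proj i

lemma fC_apply (m l n : ℕ) (ξ : ℂ) (a : ↥(Iset m l n) → ℂ) :
    fC m l n ξ a = ∑ i : ↥(Iset m l n), cC ξ n (i : ℕ) * a i := by
  simp [fC]

lemma coeff_Phi (m l n : ℕ) (a : ↥(Iset m l n) → ℂ) (i : ↥(Iset m l n)) :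
    coeff (D2 (i : ℕ) (n - (i : ℕ))) (Phi m l n a) = a i := by
  rw [Phi_apply, coeff_sum]
  rw [Finset.sum_eq_single i]
  · simp [monoC, coeff_smul, coeff_monomial]
  · intro b _ hb
    simp only [monoC, coeff_smul, coeff_monomial]
    rw [if_neg, smul_zero]
    intro h
    exact hb (Subtype.ext (D2_inj h).1)
  · intro h
    exact absurd (Finset.mem_univ i) h

lemma Phi_injective (m l n : ℕ) : Function.Injective (Phi m l n) := by
  rw [injective_iff_map_eq_zero]
  intro a ha
  funext i
  have := coeff_Phi m l n a i
  rw [ha] at this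
  simpa using this.symm


lemma eval_line_neg (ξ t : ℂ) (n i : ℕ) (c : ℂ) (hi : 1 ≤ i) (hin : i + 1 ≤ n)
    (hpar : Even (n - i - 1)) :
    evalAt t (-(ξ * t)) (dirD ξ 1 (monomial (D2 i (n-i)) c)) = c * t^(n-1) * cC ξ n i := by
  obtain ⟨k, rfl⟩ : ∃ k, i = k + 1 := ⟨i - 1, by omega⟩
  obtain ⟨j, rfl⟩ : ∃ j, n = (k + 1) + j + 1 := ⟨n - k - 2, by omega⟩
  have hje : Even j := by
    have : (k + 1) + j + 1 - (k+1) - 1 = j := by omega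
    rwa [this] at hpar
  have e1 : k + 1 - 1 = k := by omega
  have e2 : (k + 1) + j + 1 - (k + 1) = j + 1 := by omega
  have e3 : (k + 1) + j + 1 - (k + 1) - 1 = j := by omega
  have e4 : (k + 1) + j + 1 - 1 = k + j + 1 := by omega
  rw [dirD_mono, map_add, evalAt_mono, evalAt_mono, cC]
  simp only [e1, e2, e3, e4, Nat.add_sub_cancel]
  rw [Odd.neg_pow (Even.add_one hje), Even.neg_pow hje]
  push_cast
  ring

lemma eval_line_pos (ξ t : ℂ) (n i : ℕ) (c : ℂ) (hi : 1 ≤ i) (hin : i + 1 ≤ n)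
    (hpar : Even (n - i - 1)) :
    evalAt t (ξ * t) (dirD ξ (-1) (monomial (D2 i (n-i)) c)) = -(c * t^(n-1) * cC ξ n i) := by
  obtain ⟨k, rfl⟩ : ∃ k, i = k + 1 := ⟨i - 1, by omega⟩
  obtain ⟨j, rfl⟩ : ∃ j, n = (k + 1) + j + 1 := ⟨n - k - 2, by omega⟩
  have e1 : k + 1 - 1 = k := by omega
  have e2 : (k + 1) + j + 1 - (k + 1) = j + 1 := by omega
  have e3 : (k + 1) + j + 1 - (k + 1) - 1 = j := by omega
  have e4 : (k + 1) + j + 1 - 1 = k + j + 1 := by omega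
  rw [dirD_mono, map_add, evalAt_mono, evalAt_mono, cC]
  simp only [e1, e2, e3, e4, Nat.add_sub_cancel]
  push_cast
  ring


lemma mem_quasiC {m l : ℕ} {ξ : ℂ} {q : MvPolynomial (Fin 2) ℂ} : q ∈ quasiC m l ξ ↔
    (∀ r ∈ Finset.Icc 1 m, ∀ y : ℂ, evalAt 0 y ((dirD 1 0 ^ (2*r-1)) q) = 0) ∧
    (∀ r ∈ Finset.Icc 1 l, ∀ x : ℂ, evalAt x 0 ((dirD 0 1 ^ (2*r-1)) q) = 0) ∧
    (∀ t : ℂ, evalAt t (-(ξ*t)) (dirD ξ 1 q) = 0) ∧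
    (∀ t : ℂ, evalAt t (ξ*t) (dirD ξ (-1) q) = 0) := by
  simp [quasiC, Submodule.mem_inf, Submodule.mem_iInf, LinearMap.mem_ker, and_assoc]


lemma parity_even_sub {n i : ℕ} (hn : Even n) (ho : Odd i) (hi : i + 1 ≤ n) :
    Even (n - i - 1) := by
  rw [Nat.even_iff] at hn ⊢
  rw [Nat.odd_iff] at ho
  omega

lemma main_eq (m l : ℕ) (hm : 1 ≤ m) (hl : 1 ≤ l) (ξ : ℂ) (n : ℕ) (hn : Even n) :
    homogeneousSubmodule (Fin 2) ℂ n ⊓ quasiC m l ξ ⊓ suppOn {d | Odd (d 0)}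
      = Submodule.map (Phi m l n) (LinearMap.ker (fC m l n ξ)) := by
  apply le_antisymm
  · -- hard direction: quasi-invariants come from the kernel
    rintro q hq
    rw [Submodule.mem_inf, Submodule.mem_inf] at hq
    obtain ⟨⟨hhom, hquasi⟩, hsupp⟩ := hq
    rw [mem_quasiC] at hquasi
    obtain ⟨hx, hy, hp, -⟩ := hquasi
    set A : ℕ → ℂ := fun i => coeff (D2 i (n-i)) q with hA
    have hq0 := rep n q hhom hsupp
    -- vanishing of low and high coefficients
    have hvan : ∀ i ∈ odds n, i ∉ Iset m l n → A i = 0 := by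
      intro i hoi hni
      have hoi' := hoi
      simp only [odds, Finset.mem_filter, Finset.mem_range] at hoi'
      obtain ⟨hile, hiodd⟩ := hoi'
      have hine : i ≠ n := by
        rw [Nat.even_iff] at hn; rw [Nat.odd_iff] at hiodd; omega
      rw [mem_Iset] at hni
      push_neg at hni
      rcases lt_or_ge i (2*m+1) with hcase | hcase
      · -- use the x-condition with r = (i+1)/2
        set r := (i+1)/2 with hr
        have hrm : r ∈ Finset.Icc 1 m := by
          rw [Finset.mem_Icc]
          rw [Nat.odd_iff] at hiodd
          omega
        have h2r : 2*r - 1 = i := by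
          rw [Nat.odd_iff] at hiodd
          omega
        have hcond := hx r hrm 1
        rw [h2r, hq0, map_sum, map_sum] at hcond
        rw [Finset.sum_eq_single_of_mem i hoi] at hcond
        · rw [dirD10_pow, evalAt_mono, Nat.sub_self, pow_zero, Nat.descFactorial_self,
            one_pow, mul_one, mul_one] at hcond
          have : (Nat.factorial i : ℂ) ≠ 0 := by
            exact_mod_cast Nat.factorial_ne_zero i
          exact (mul_eq_zero.mp hcond).resolve_right this
        · intro b hb hbne
          simp only [odds, Finset.mem_filter, Finset.mem_range] at hb
          rw [dirD10_pow, evalAt_mono]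
          rcases lt_or_ge b i with hbi | hbi
          · rw [Nat.descFactorial_eq_zero_iff_lt.mpr hbi]
            simp
          · rw [zero_pow (by omega)]
            simp
      · -- use the y-condition with r = (n-i+1)/2
        have hcase2 : n < i + 2*l + 1 := hni hiodd hcase
        set r := (n-i+1)/2 with hr
        have hrm : r ∈ Finset.Icc 1 l := by
          rw [Finset.mem_Icc]
          rw [Nat.odd_iff] at hiodd
          rw [Nat.even_iff] at hn
          omega
        have h2r : 2*r - 1 = n - i := by
          rw [Nat.odd_iff] at hiodd
          rw [Nat.even_iff] at hn
          omega
        have hcond := hy r hrm 1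
        rw [h2r, hq0, map_sum, map_sum] at hcond
        rw [Finset.sum_eq_single_of_mem i hoi] at hcond
        · rw [dirD01_pow, evalAt_mono, Nat.sub_self, pow_zero, Nat.descFactorial_self,
            one_pow, mul_one, mul_one] at hcond
          have : (Nat.factorial (n-i) : ℂ) ≠ 0 := by
            exact_mod_cast Nat.factorial_ne_zero (n-i)
          exact (mul_eq_zero.mp hcond).resolve_right this
        · intro b hb hbne
          simp only [odds, Finset.mem_filter, Finset.mem_range] at hb
          rw [dirD01_pow, evalAt_mono]
          rcases lt_or_ge (n-b) (n-i) with hbi | hbi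
          · rw [Nat.descFactorial_eq_zero_iff_lt.mpr hbi]
            simp
          · have : n - b ≠ n - i := by omega
            rw [zero_pow (by omega)]
            simp
    -- representation over the index set
    have hsub : Iset m l n ⊆ odds n := by
      intro i hi
      rw [mem_Iset] at hi
      simp only [odds, Finset.mem_filter, Finset.mem_range]
      exact ⟨by omega, hi.1⟩
    have hqI : q = ∑ i ∈ Iset m l n, monomial (D2 i (n-i)) (A i) := by
      rw [hq0]
      rw [Finset.sum_subset hsub]
      intro x hx hnx
      rw [hvan x hx hnx]
      exact map_zero _
    refine ⟨fun i => A i, ?_, ?_⟩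
    · rw [SetLike.mem_coe, LinearMap.mem_ker, fC_apply]
      have hcond := hp 1
      rw [hqI, map_sum, map_sum] at hcond
      have hterm : ∀ i ∈ Iset m l n,
          evalAt 1 (-(ξ*1)) (dirD ξ 1 (monomial (D2 i (n-i)) (A i))) = cC ξ n i * A i := by
        intro i hi
        rw [mem_Iset] at hi
        obtain ⟨ho, h1, h2⟩ := hi
        rw [eval_line_neg ξ 1 n i (A i) (by omega) (by omega)
          (parity_even_sub hn ho (by omega)), one_pow, mul_one]
        ring
      rw [Finset.sum_congr rfl hterm] at hcond
      have hcs := Finset.sum_coe_sort (Iset m l n) (fun i => cC ξ n i * A i)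
      rw [hcs]
      exact hcond
    · rw [Phi_apply]
      have hcs := Finset.sum_coe_sort (Iset m l n)
        (fun i => monomial (D2 i (n-i)) (A i))
      rw [hqI, ← hcs]
      refine Finset.sum_congr rfl fun i _ => ?_
      rw [monoC, smul_monomial, smul_eq_mul, mul_one]
  · -- easy direction: image of the kernel consists of quasi-invariants
    rintro x ⟨a, ha, rfl⟩
    rw [SetLike.mem_coe, LinearMap.mem_ker, fC_apply] at ha
    have hfacts : ∀ i : ↥(Iset m l n), Odd (i : ℕ) ∧ 2*m+1 ≤ (i : ℕ) ∧ (i : ℕ) + 2*l+1 ≤ n :=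
      fun i => mem_Iset.mp i.2
    rw [Submodule.mem_inf, Submodule.mem_inf]
    refine ⟨⟨?_, ?_⟩, ?_⟩
    · -- homogeneous
      rw [Phi_apply]
      refine Submodule.sum_mem _ fun i _ => Submodule.smul_mem _ _ ?_
      rw [mem_homogeneousSubmodule, monoC]
      refine isHomogeneous_monomial _ ?_
      rw [degree_fin2, D2_apply0, D2_apply1]
      have := (hfacts i).2.2
      omega
    · -- quasi-invariant
      rw [mem_quasiC]
      refine ⟨?_, ?_, ?_, ?_⟩
      · intro r hr y
        rw [Finset.mem_Icc] at hr
        rw [Phi_apply, map_sum, map_sum]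
        refine Finset.sum_eq_zero fun i _ => ?_
        rw [map_smul, map_smul, monoC, dirD10_pow, evalAt_mono]
        rw [zero_pow (by have := (hfacts i).2.1; omega)]
        simp
      · intro r hr x
        rw [Finset.mem_Icc] at hr
        rw [Phi_apply, map_sum, map_sum]
        refine Finset.sum_eq_zero fun i _ => ?_
        rw [map_smul, map_smul, monoC, dirD01_pow, evalAt_mono]
        rw [zero_pow (by have := (hfacts i).2.2; omega)]
        simp
      · intro t
        rw [Phi_apply, map_sum, map_sum]
        have hterm : ∀ i : ↥(Iset m l n),
            evalAt t (-(ξ*t)) (dirD ξ 1 (monoC n i)) = t^(n-1) * cC ξ n i := by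
          intro i
          obtain ⟨ho, h1, h2⟩ := hfacts i
          rw [monoC, eval_line_neg ξ t n i 1 (by omega) (by omega)
            (parity_even_sub hn ho (by omega)), one_mul]
        calc ∑ i : ↥(Iset m l n), evalAt t (-(ξ*t)) (dirD ξ 1 (a i • monoC n i))
            = ∑ i : ↥(Iset m l n), t^(n-1) * (cC ξ n i * a i) := by
              refine Finset.sum_congr rfl fun i _ => ?_
              rw [map_smul, map_smul, hterm i, smul_eq_mul]
              ring
          _ = t^(n-1) * ∑ i : ↥(Iset m l n), cC ξ n i * a i := by
              rw [Finset.mul_sum]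
          _ = 0 := by rw [ha, mul_zero]
      · intro t
        rw [Phi_apply, map_sum, map_sum]
        have hterm : ∀ i : ↥(Iset m l n),
            evalAt t (ξ*t) (dirD ξ (-1) (monoC n i)) = -(t^(n-1) * cC ξ n i) := by
          intro i
          obtain ⟨ho, h1, h2⟩ := hfacts i
          rw [monoC, eval_line_pos ξ t n i 1 (by omega) (by omega)
            (parity_even_sub hn ho (by omega)), one_mul]
        calc ∑ i : ↥(Iset m l n), evalAt t (ξ*t) (dirD ξ (-1) (a i • monoC n i))
            = ∑ i : ↥(Iset m l n), -(t^(n-1) * (cC ξ n i * a i)) := by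
              refine Finset.sum_congr rfl fun i _ => ?_
              rw [map_smul, map_smul, hterm i, smul_eq_mul]
              ring
          _ = -(t^(n-1) * ∑ i : ↥(Iset m l n), cC ξ n i * a i) := by
              rw [Finset.mul_sum, Finset.sum_neg_distrib]
          _ = 0 := by rw [ha, mul_zero, neg_zero]
    · -- supported on odd powers of x
      intro d hd
      rw [Phi_apply, coeff_sum]
      refine Finset.sum_eq_zero fun i _ => ?_
      rw [coeff_smul, monoC, coeff_monomial]
      rw [if_neg, smul_zero]
      intro h
      refine hd ?_
      have : d 0 = (i : ℕ) := by rw [← h, D2_apply0]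
      rw [Set.mem_setOf_eq, this]
      exact (hfacts i).1

end QCaux
end

/-- For even `n`, the dimension of the space of homogeneous quasi-invariants of degree `n` for
`C₂(m,l)` supported on odd powers of `x` is `0` if `n < 2(m+l+1)`, is `1` if `n = 2(m+l+1)`,
and is `n/2 - m - l - 1` if `n > 2(m+l+1)`. -/
theorem quasiC_even_odd_dimension (m l : ℕ) (hm : 1 ≤ m) (hl : 1 ≤ l) (ξ : ℂ)
    (hξ : ξ ^ 2 = (2 * (l : ℂ) + 1) / (2 * (m : ℂ) + 1)) (n : ℕ) (hn : Even n) :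
    Module.finrank ℂ
        ↥(MvPolynomial.homogeneousSubmodule (Fin 2) ℂ n ⊓ quasiC m l ξ ⊓
          suppOn {d | Odd (d 0)}) =
      if n < 2 * (m + l + 1) then 0
      else if n = 2 * (m + l + 1) then 1
      else n / 2 - m - l - 1 := by
  classical
  have hm0 : (2*(m:ℂ)+1) ≠ 0 := by
    have : ((2*m+1 : ℕ) : ℂ) ≠ 0 := Nat.cast_ne_zero.mpr (by omega)
    push_cast at this
    exact this
  have hl0 : (2*(l:ℂ)+1) ≠ 0 := by
    have : ((2*l+1 : ℕ) : ℂ) ≠ 0 := Nat.cast_ne_zero.mpr (by omega)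
    push_cast at this
    exact this
  have hξ' : ξ^2 * (2*(m:ℂ)+1) = 2*(l:ℂ)+1 := by
    field_simp at hξ
    linear_combination hξ
  have hξne : ξ ≠ 0 := by
    intro h
    rw [h] at hξ'
    apply hl0
    linear_combination -hξ'
  rw [QCaux.main_eq m l hm hl ξ n hn]
  rw [← LinearEquiv.finrank_eq
    (Submodule.equivMapOfInjective _ (QCaux.Phi_injective m l n) (LinearMap.ker (QCaux.fC m l n ξ)))]
  have hdim : Module.finrank ℂ (↥(QCaux.Iset m l n) → ℂ) = n/2 - m - l := by
    rw [Module.finrank_fintype_fun_eq_card, Fintype.card_coe, QCaux.Iset_card m l n hn]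
  rcases lt_trichotomy n (2*(m+l+1)) with hlt | heq | hgt
  · rw [if_pos hlt]
    have hz : n/2 - m - l = 0 := by
      rw [Nat.even_iff] at hn
      omega
    have hle := Submodule.finrank_le (LinearMap.ker (QCaux.fC m l n ξ))
    rw [hdim, hz] at hle
    omega
  · rw [if_neg (by omega), if_pos heq]
    have hker : LinearMap.ker (QCaux.fC m l n ξ) = ⊤ := by
      rw [LinearMap.ker_eq_top]
      apply LinearMap.ext
      intro a
      rw [QCaux.fC_apply, LinearMap.zero_apply]
      refine Finset.sum_eq_zero fun i _ => ?_
      obtain ⟨ho, h1, h2⟩ := QCaux.mem_Iset.mp i.2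
      have hi0 : (i : ℕ) = 2*m+1 := by
        rw [Nat.odd_iff] at ho
        omega
      have hC : QCaux.cC ξ n (i:ℕ) = 0 := by
        rw [QCaux.cC, hi0]
        have hcast : (n : ℂ) = 2*(m:ℂ) + 2*(l:ℂ) + 2 := by
          rw [heq]
          push_cast
          ring
        rw [hcast]
        push_cast
        have : 2*(m:ℂ) + 2*(l:ℂ) + 2 - (2*(m:ℂ)+1) - ξ^2 * (2*(m:ℂ)+1) = 0 := by
          linear_combination -hξ'
        rw [this, mul_zero]
      rw [hC, zero_mul]
    rw [hker, finrank_top, hdim]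
    rw [Nat.even_iff] at hn
    omega
  · rw [if_neg (by omega), if_neg (by omega)]
    -- pick an index where the functional is nonzero
    have hnge : 2*m + 2*l + 4 ≤ n := by
      rw [Nat.even_iff] at hn
      omega
    have h1m : (2*m+1) ∈ QCaux.Iset m l n := QCaux.mem_Iset.mpr ⟨⟨m, by ring⟩, le_refl _, by omega⟩
    have h3m : (2*m+3) ∈ QCaux.Iset m l n :=
      QCaux.mem_Iset.mpr ⟨⟨m+1, by ring⟩, by omega, by omega⟩
    have hB : ∀ i : ℕ, QCaux.cC ξ n i = 0 → (n:ℂ) - i - ξ^2 * i = 0 := by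
      intro i h
      rcases mul_eq_zero.mp h with h' | h'
      · exact absurd h' (pow_ne_zero _ hξne)
      · exact h'
    obtain ⟨i₀, hi₀I, hi₀⟩ : ∃ i₀, i₀ ∈ QCaux.Iset m l n ∧ QCaux.cC ξ n i₀ ≠ 0 := by
      by_cases hc : QCaux.cC ξ n (2*m+1) = 0
      · refine ⟨2*m+3, h3m, fun hc2 => ?_⟩
        have e1 := hB _ hc
        have e2 := hB _ hc2
        push_cast at e1 e2
        have hx2 : ξ^2 = -1 := by linear_combination (e1 - e2)/2
        rw [hx2] at hξ'
        have hz : (2*(m:ℂ) + 2*(l:ℂ) + 2) = 0 := by linear_combination -hξ'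
        have hcast : ((2*m+2*l+2 : ℕ) : ℂ) ≠ 0 := Nat.cast_ne_zero.mpr (by omega)
        push_cast at hcast
        exact hcast (by linear_combination hz)
      · exact ⟨2*m+1, h1m, hc⟩
    have happ : QCaux.fC m l n ξ (Pi.single (⟨i₀, hi₀I⟩ : ↥(QCaux.Iset m l n)) 1)
        = QCaux.cC ξ n i₀ := by
      rw [QCaux.fC_apply]
      rw [Finset.sum_eq_single (⟨i₀, hi₀I⟩ : ↥(QCaux.Iset m l n))]
      · simp
      · intro b _ hb
        rw [Pi.single_eq_of_ne hb, mul_zero]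
      · intro h
        exact absurd (Finset.mem_univ _) h
    have hsurj : LinearMap.range (QCaux.fC m l n ξ) = ⊤ := by
      rw [LinearMap.range_eq_top]
      intro z
      have w : ↥(QCaux.Iset m l n) → ℂ := Pi.single ⟨i₀, hi₀I⟩ 1
      refine ⟨(z / QCaux.cC ξ n i₀) • (Pi.single ⟨i₀, hi₀I⟩ 1 : ↥(QCaux.Iset m l n) → ℂ), ?_⟩
      rw [map_smul, happ, smul_eq_mul, div_mul_cancel₀ _ hi₀]
    have hrn := LinearMap.finrank_range_add_finrank_ker (QCaux.fC m l n ξ)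
    rw [hsurj, finrank_top, Module.finrank_self, hdim] at hrn
    rw [Nat.even_iff] at hn
    omega
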